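/- Let ψ be a complex-valued additive character of G = ℤ/Nℤ whose order o(ψ) is not divisible by p (so that o(ψ) divides n+1 and (p−1)N/(p·o(ψ)) is a positive integer), and let k ≥ 1. Then F_ψ(X̄_k) = (−1)^k · k! · [u^k](1 − u^{o(ψ)})^{(p−1)N/(p·o(ψ))}, where [u^k] denotes the coefficient of u^k in the polynomial. -/

import Mathlib

open Finset

/-- `D`: the residues in `ℤ/Nℤ` not divisible by `p` (complement of the
index-`p` subgroup `pG`). -/
def resD (p N : ℕ) [NeZero N] : Finset (ZMod N) :=
  Finset.univ.filter fun a => ¬ p ∣ a.val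

/-- `s_D(ψ) = Σ_{a ∈ D} ψ(a)`. -/
noncomputable def sD (p N : ℕ) [NeZero N] (ψ : AddChar (ZMod N) ℂ) : ℂ :=
  ∑ a ∈ resD p N, ψ a

open Polynomial

section Helpers

lemma count_mod_eq (M d v₀ : ℕ) (hd : 0 < d) (hdM : d ∣ M) (hv₀ : v₀ < d) :
    ((Finset.range M).filter (fun v => v % d = v₀)).card = M / d := by
  rw [← Finset.card_range (M / d)]
  apply Finset.card_bij' (fun v _ => v / d) (fun j _ => v₀ + d * j)
  · intro v hv
    simp only [mem_filter, mem_range] at hv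
    exact mem_range.2 (Nat.div_lt_div_of_lt_of_dvd hdM hv.1)
  · intro j hj
    simp only [mem_range] at hj
    simp only [mem_filter, mem_range, Nat.add_mul_mod_self_left, Nat.mod_eq_of_lt hv₀,
      and_true]
    have h2 : d * (M / d) = M := Nat.mul_div_cancel' hdM
    have h3 : d * (j + 1) ≤ d * (M / d) := Nat.mul_le_mul_left d (by omega)
    nlinarith
  · intro v hv
    simp only [mem_filter, mem_range] at hv
    rw [← hv.2]
    exact Nat.mod_add_div v d
  · intro j hj
    rw [Nat.add_mul_div_left _ _ hd, Nat.div_eq_of_lt hv₀, zero_add]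

lemma pow_fiber_iff {d : ℕ} {ω : ℂ} (hprim : IsPrimitiveRoot ω d) (hd : 0 < d)
    (v v₀ : ℕ) (hv₀ : v₀ < d) : ω ^ v = ω ^ v₀ ↔ v % d = v₀ := by
  have key : ω ^ v = ω ^ (v % d) := by
    conv_lhs => rw [← Nat.mod_add_div v d]
    rw [pow_add, pow_mul, hprim.pow_eq_one, one_pow, mul_one]
  rw [key]
  constructor
  · exact fun h => hprim.pow_inj (Nat.mod_lt _ hd) hv₀ h
  · intro h; rw [h]

lemma count_pow_fiber {M d : ℕ} (ω ζ : ℂ) (hω : orderOf ω = d) (hd : 0 < d)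
    (hdM : d ∣ M) (hζ : ζ ^ d = 1) :
    ((Finset.range M).filter (fun v => ω ^ v = ζ)).card = M / d := by
  have : NeZero d := ⟨hd.ne'⟩
  have hprim : IsPrimitiveRoot ω d := hω ▸ IsPrimitiveRoot.orderOf ω
  obtain ⟨v₀, hv₀lt, hv₀⟩ := hprim.eq_pow_of_pow_eq_one hζ
  rw [← count_mod_eq M d v₀ hd hdM hv₀lt]
  congr 1
  apply Finset.filter_congr
  intro v _
  rw [← hv₀, pow_fiber_iff hprim hd v v₀ hv₀lt]

lemma zmod_fiber_card {N d : ℕ} [NeZero N] (ω ζ : ℂ) (hω : orderOf ω = d) (hd : 0 < d)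
    (hdN : d ∣ N) (hζ : ζ ^ d = 1) :
    (Finset.univ.filter (fun a : ZMod N => ω ^ a.val = ζ)).card = N / d := by
  rw [← count_pow_fiber ω ζ hω hd hdN hζ]
  apply Finset.card_bij' (fun (a : ZMod N) _ => a.val) (fun v _ => (v : ZMod N))
  · intro a ha
    simp only [mem_filter, mem_univ, true_and] at ha
    simp only [mem_filter, mem_range, ha, and_true]
    exact ZMod.val_lt a
  · intro v hv
    simp only [mem_filter, mem_range] at hv
    simp only [mem_filter, mem_univ, true_and, ZMod.val_cast_of_lt hv.1, hv.2]
  · intro a _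
    exact ZMod.natCast_rightInverse a
  · intro v hv
    simp only [mem_filter, mem_range] at hv
    exact ZMod.val_cast_of_lt hv.1

lemma zmod_fiber_card_dvd {N d p : ℕ} [NeZero N] (hp : 0 < p) (ω ζ : ℂ)
    (hω : orderOf ω = d) (hd : 0 < d) (hpd : Nat.Coprime p d) (hdN : p * d ∣ N) (hζ : ζ ^ d = 1) :
    (Finset.univ.filter (fun a : ZMod N => p ∣ a.val ∧ ω ^ a.val = ζ)).card = N / (p * d) := by
  have hpN : p ∣ N := dvd_trans (Dvd.intro d rfl) hdN
  have hdNp : d ∣ N / p := Nat.dvd_div_of_mul_dvd hdN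
  have hω' : orderOf (ω ^ p) = d := by
    rw [← hω] at hpd ⊢
    exact (hpd.symm).orderOf_pow
  have key := count_pow_fiber (M := N / p) (ω ^ p) ζ hω' hd hdNp hζ
  rw [Nat.div_div_eq_div_mul] at key
  rw [← key]
  have hmul : ∀ w : ℕ, w < N / p → p * w < N := fun w hw =>
    lt_of_lt_of_le ((Nat.mul_lt_mul_left hp).2 hw) (Nat.le_of_eq (Nat.mul_div_cancel' hpN))
  apply Finset.card_bij' (fun (a : ZMod N) _ => a.val / p) (fun w _ => ((p * w : ℕ) : ZMod N))
  · intro a ha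
    simp only [mem_filter, mem_univ, true_and] at ha
    simp only [mem_filter, mem_range]
    refine ⟨Nat.div_lt_div_of_lt_of_dvd hpN (ZMod.val_lt a), ?_⟩
    rw [← pow_mul, Nat.mul_div_cancel' ha.1]
    exact ha.2
  · intro w hw
    simp only [mem_filter, mem_range] at hw
    simp only [mem_filter, mem_univ, true_and, ZMod.val_cast_of_lt (hmul w hw.1)]
    exact ⟨⟨w, rfl⟩, by rw [pow_mul]; exact hw.2⟩
  · intro a ha
    simp only [mem_filter, mem_univ, true_and] at ha
    rw [Nat.mul_div_cancel' ha.1]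
    exact ZMod.natCast_rightInverse a
  · intro w hw
    simp only [mem_filter, mem_range] at hw
    rw [ZMod.val_cast_of_lt (hmul w hw.1), Nat.mul_div_cancel_left _ hp]

lemma card_inj_eq_factorial {α : Type*} [DecidableEq α] [Fintype α] (k : ℕ) (S : Finset α)
    (hS : S.card = k) :
    (Finset.univ.filter (fun x : Fin k → α =>
      Function.Injective x ∧ Finset.image x Finset.univ = S)).card = k.factorial := by
  classical
  rw [← Fintype.card_subtype]
  have hcard : Fintype.card (Fin k) = Fintype.card {a // a ∈ S} := by
    simp [Fintype.card_coe, hS]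
  have E : {x : Fin k → α // Function.Injective x ∧ Finset.image x Finset.univ = S} ≃
      (Fin k ≃ {a // a ∈ S}) := by
    refine
      { toFun := fun x => Equiv.ofBijective
          (fun i => (⟨x.1 i, by
            have h := mem_image_of_mem x.1 (mem_univ i); rwa [x.2.2] at h⟩ : {a // a ∈ S}))
          ((Fintype.bijective_iff_injective_and_card _).2
            ⟨fun i j h => x.2.1 (by simpa [Subtype.ext_iff] using h), hcard⟩)
        invFun := fun e => ⟨fun i => (e i : α),
          Subtype.coe_injective.comp e.injective, ?_⟩
        left_inv := fun x => by ext i; rfl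
        right_inv := fun e => by ext i; rfl }
    ext a
    simp only [mem_image, mem_univ, true_and]
    constructor
    · rintro ⟨i, rfl⟩; exact (e i).2
    · intro ha
      obtain ⟨i, hi⟩ := e.surjective ⟨a, ha⟩
      exact ⟨i, by rw [hi]⟩
  rw [Fintype.card_congr E, Fintype.card_equiv (Fintype.equivOfCardEq hcard),
    Fintype.card_fin]

lemma sum_inj_tuples {α : Type*} [DecidableEq α] [Fintype α] (k : ℕ) (D : Finset α)
    (f : α → ℂ) :
    ∑ x ∈ Finset.univ.filter (fun x : Fin k → α =>
        (∀ i, x i ∈ D) ∧ Function.Injective x), ∏ i, f (x i)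
      = (k.factorial : ℂ) * ∑ S ∈ D.powersetCard k, ∏ a ∈ S, f a := by
  classical
  rw [← Finset.sum_fiberwise_of_maps_to (g := fun x => Finset.image x Finset.univ)
    (t := D.powersetCard k) ?_ (fun x => ∏ i, f (x i))]
  · rw [mul_sum]
    refine Finset.sum_congr rfl fun S hS => ?_
    rw [mem_powersetCard] at hS
    have hfib : (Finset.univ.filter (fun x : Fin k → α =>
        (∀ i, x i ∈ D) ∧ Function.Injective x)).filter
          (fun x => Finset.image x Finset.univ = S)
        = Finset.univ.filter (fun x : Fin k → α =>
            Function.Injective x ∧ Finset.image x Finset.univ = S) := by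
      ext x
      simp only [mem_filter, mem_univ, true_and]
      constructor
      · rintro ⟨⟨_, hinj⟩, himg⟩; exact ⟨hinj, himg⟩
      · rintro ⟨hinj, himg⟩
        exact ⟨⟨fun i => hS.1 (by rw [← himg]; exact mem_image_of_mem x (mem_univ i)), hinj⟩,
          himg⟩
    rw [hfib]
    have : ∀ x ∈ Finset.univ.filter (fun x : Fin k → α =>
        Function.Injective x ∧ Finset.image x Finset.univ = S),
        ∏ i, f (x i) = ∏ a ∈ S, f a := by
      intro x hx
      simp only [mem_filter, mem_univ, true_and] at hx
      rw [← hx.2, Finset.prod_image (fun i _ j _ h => hx.1 h)]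
    rw [Finset.sum_congr rfl this, Finset.sum_const, card_inj_eq_factorial k S hS.2,
      nsmul_eq_mul]
  · intro x hx
    simp only [mem_filter, mem_univ, true_and] at hx
    rw [mem_powersetCard]
    refine ⟨fun a ha => ?_, ?_⟩
    · obtain ⟨i, _, rfl⟩ := mem_image.1 ha
      exact hx.1 i
    · rw [Finset.card_image_of_injective _ hx.2, card_univ, Fintype.card_fin]

lemma coeff_prod_one_add {α : Type*} [DecidableEq α] (D : Finset α) (f : α → ℂ) (k : ℕ) :
    (∏ a ∈ D, (1 + C (f a) * X)).coeff k = ∑ S ∈ D.powersetCard k, ∏ a ∈ S, f a := by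
  have h1 : ∏ a ∈ D, (1 + C (f a) * X) = ∏ a ∈ D, (C (f a) * X + 1) := by
    simp [add_comm]
  rw [h1, Finset.prod_add]
  simp only [Finset.prod_const_one, mul_one, Finset.prod_mul_distrib, Finset.prod_const]
  have hC : ∀ t : Finset α, ∏ a ∈ t, C (f a) = C (∏ a ∈ t, f a) := fun t =>
    (map_prod Polynomial.C f t).symm
  simp only [hC]
  rw [Polynomial.finset_sum_coeff]
  simp only [Polynomial.coeff_C_mul, Polynomial.coeff_X_pow]
  rw [Finset.powersetCard_eq_filter, Finset.sum_filter]
  refine Finset.sum_congr rfl fun t _ => ?_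
  by_cases h : k = t.card
  · simp [h]
  · rw [if_neg h, if_neg (fun hh : t.card = k => h hh.symm), mul_zero]

lemma prod_one_add_nthRoots (d : ℕ) (hd : 0 < d) :
    ∏ ζ ∈ Polynomial.nthRootsFinset d (1 : ℂ), (1 + C ζ * X) = 1 - (- X) ^ d := by
  have hprim := Complex.isPrimitiveRoot_exp d hd.ne'
  have hroots := Polynomial.X_pow_sub_one_eq_prod hd hprim
  have heval : ∀ y : ℂ, y ^ d - 1 = ∏ ζ ∈ Polynomial.nthRootsFinset d (1 : ℂ), (y - ζ) := by
    intro y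
    have := congrArg (Polynomial.eval y) hroots
    simpa [Polynomial.eval_prod] using this
  apply Polynomial.funext
  intro x
  simp only [Polynomial.eval_prod, Polynomial.eval_add, Polynomial.eval_one,
    Polynomial.eval_mul, Polynomial.eval_C, Polynomial.eval_X, Polynomial.eval_sub,
    Polynomial.eval_pow, Polynomial.eval_neg]
  by_cases hx : x = 0
  · simp [hx, zero_pow hd.ne']
  · have hx' : (-x) ≠ 0 := neg_ne_zero.2 hx
    have step : ∀ ζ : ℂ, 1 + ζ * x = (-x) * ((-x)⁻¹ - ζ) := by
      intro ζ
      field_simp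
      ring
    calc ∏ ζ ∈ Polynomial.nthRootsFinset d (1 : ℂ), (1 + ζ * x)
        = ∏ ζ ∈ Polynomial.nthRootsFinset d (1 : ℂ), ((-x) * ((-x)⁻¹ - ζ)) :=
          Finset.prod_congr rfl fun ζ _ => step ζ
      _ = (-x) ^ d * (((-x)⁻¹) ^ d - 1) := by
          rw [Finset.prod_mul_distrib, Finset.prod_const, hprim.card_nthRootsFinset,
            ← heval ((-x)⁻¹)]
      _ = 1 - (-x) ^ d := by
          rw [mul_sub, ← mul_pow, mul_inv_cancel₀ hx', one_pow, mul_one]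

lemma coeff_one_add_C_pow (c : ℂ) (d m k : ℕ) :
    (((1 + C c * X ^ d) ^ m : Polynomial ℂ)).coeff k
      = ∑ j ∈ Finset.range (m + 1), (if k = d * j then c ^ j * (m.choose j : ℂ) else 0) := by
  rw [add_comm (1 : Polynomial ℂ), add_pow]
  simp only [one_pow, mul_one, mul_pow, ← Polynomial.C_pow, ← pow_mul]
  rw [Polynomial.finset_sum_coeff]
  refine Finset.sum_congr rfl fun j _ => ?_
  rw [← Polynomial.C_eq_natCast, mul_assoc, mul_comm (X ^ (d * j)), ← mul_assoc,
    ← Polynomial.C_mul, Polynomial.coeff_C_mul, Polynomial.coeff_X_pow]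
  by_cases h : k = d * j <;> simp [h]

end Helpers


theorem stmt_aux {N : ℕ} [NeZero N] (p k : ℕ) (hp : p.Prime)
    (ψ : AddChar (ZMod N) ℂ) (hpN : p ∣ N) (hord : ¬ p ∣ orderOf ψ) :
    (∑ x ∈ Finset.univ.filter
        (fun x : Fin k → ZMod N =>
          (∀ i, x i ∈ resD p N) ∧ Function.Injective x),
      ∏ i, ψ (x i)) =
    (-1) ^ k * (Nat.factorial k : ℂ) *
      (((1 - Polynomial.X ^ (orderOf ψ)) ^
          ((p - 1) * N / (p * orderOf ψ)) : Polynomial ℂ).coeff k) := by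
  classical
  set d := orderOf ψ with hd
  set ω := ψ 1 with hω
  have hNpos : 0 < N := Nat.pos_of_ne_zero (NeZero.ne N)
  have h1 : ∀ a : ZMod N, ψ a = ω ^ a.val := by
    intro a
    conv_lhs => rw [← ZMod.natCast_rightInverse a]
    rw [show ((a.val : ZMod N)) = a.val • (1 : ZMod N) by simp [nsmul_eq_mul]]
    exact ψ.map_nsmul_eq_pow a.val 1
  have hψN : ψ ^ N = 1 := by
    ext a
    rw [AddChar.pow_apply, ← ψ.map_nsmul_eq_pow, show N • a = 0 by
      simp [nsmul_eq_mul, ZMod.natCast_self], AddChar.map_zero_eq_one, AddChar.one_apply]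
  have hdN : d ∣ N := orderOf_dvd_of_pow_eq_one hψN
  have hd0 : 0 < d := by
    rcases Nat.eq_zero_or_pos d with h | h
    · exact absurd (zero_dvd_iff.1 (h ▸ hdN)) hNpos.ne'
    · exact h
  have horder : orderOf ω = d := by
    rw [hd, orderOf_eq_orderOf_iff]
    intro m
    constructor
    · intro hm
      ext a
      rw [AddChar.pow_apply, h1 a, ← pow_mul, mul_comm, pow_mul, hm, one_pow,
        AddChar.one_apply]
    · intro hm
      have := congrArg (fun χ : AddChar (ZMod N) ℂ => χ 1) hm
      simpa [AddChar.pow_apply, AddChar.one_apply] using this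
  have hpd : Nat.Coprime p d := (Nat.Prime.coprime_iff_not_dvd hp).2 hord
  have hpdN : p * d ∣ N := Nat.Coprime.mul_dvd_of_dvd_of_dvd hpd hpN hdN
  set e := N / (p * d) with he
  have hepos : 0 < e := Nat.div_pos (Nat.le_of_dvd hNpos hpdN) (Nat.mul_pos hp.pos hd0)
  have heN : N = p * d * e := (Nat.mul_div_cancel' hpdN).symm
  set m := (p - 1) * N / (p * d) with hm
  have hme : m = (p - 1) * e := Nat.mul_div_assoc _ hpdN
  have hmpos : 0 < m := by
    rw [hme]
    have h2 : 0 < p - 1 := by have := hp.two_le; omega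
    positivity
  have hNd : N / d = p * e := by
    conv_lhs => rw [heN]
    rw [show p * d * e = d * (p * e) by ring, Nat.mul_div_cancel_left _ hd0]
  have hNpd : N / (p * d) = e := rfl
  have hsub : N / d - N / (p * d) = m := by
    rw [hNd, hNpd, hme, Nat.sub_mul, one_mul]
  -- fiber cardinality over resD
  have hfiber : ∀ ζ ∈ Polynomial.nthRootsFinset d (1 : ℂ),
      ((resD p N).filter (fun a => ψ a = ζ)).card = m := by
    intro ζ hζ
    rw [Polynomial.mem_nthRootsFinset hd0] at hζ
    have hA : (Finset.univ.filter (fun a : ZMod N => ω ^ a.val = ζ)).card = N / d :=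
      zmod_fiber_card ω ζ horder hd0 hdN hζ
    have hB : (Finset.univ.filter (fun a : ZMod N => p ∣ a.val ∧ ω ^ a.val = ζ)).card
        = N / (p * d) :=
      zmod_fiber_card_dvd hp.pos ω ζ horder hd0 hpd hpdN hζ
    have h2 : ((resD p N).filter (fun a => ψ a = ζ))
        = (Finset.univ.filter (fun a : ZMod N => ω ^ a.val = ζ)).filter
            (fun a => ¬ p ∣ a.val) := by
      ext a
      simp only [resD, Finset.filter_filter, Finset.mem_filter, Finset.mem_univ, true_and,
        h1 a]
      tauto
    have h3 : (Finset.univ.filter (fun a : ZMod N => p ∣ a.val ∧ ω ^ a.val = ζ))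
        = (Finset.univ.filter (fun a : ZMod N => ω ^ a.val = ζ)).filter
            (fun a => p ∣ a.val) := by
      ext a
      simp only [Finset.filter_filter, Finset.mem_filter, Finset.mem_univ, true_and]
      tauto
    have hsplit := Finset.card_filter_add_card_filter_not
      (s := Finset.univ.filter (fun a : ZMod N => ω ^ a.val = ζ)) (fun a => p ∣ a.val)
    rw [← h2, ← h3, hA, hB] at hsplit
    omega
  -- image of ψ on resD is the set of d-th roots of unity
  have himg : (resD p N).image (fun a => ψ a) = Polynomial.nthRootsFinset d (1 : ℂ) := by
    apply Finset.Subset.antisymm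
    · intro ζ hζ
      obtain ⟨a, _, rfl⟩ := Finset.mem_image.1 hζ
      rw [Polynomial.mem_nthRootsFinset hd0, ← AddChar.pow_apply, hd,
        pow_orderOf_eq_one, AddChar.one_apply]
    · intro ζ hζ
      have h4 := hfiber ζ hζ
      have hpos : 0 < ((resD p N).filter (fun a => ψ a = ζ)).card := h4 ▸ hmpos
      obtain ⟨a, ha⟩ := Finset.card_pos.1 hpos
      rw [Finset.mem_filter] at ha
      exact Finset.mem_image.2 ⟨a, ha.1, ha.2⟩
  have hprod : (∏ a ∈ resD p N, (1 + C (ψ a) * X)) = (1 - (- X) ^ d) ^ m := by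
    rw [Finset.prod_comp (fun z : ℂ => 1 + C z * X) (fun a => ψ a), himg]
    rw [Finset.prod_congr rfl (fun ζ hζ => by rw [hfiber ζ hζ]),
      Finset.prod_pow, prod_one_add_nthRoots d hd0]
  rw [sum_inj_tuples k (resD p N) (fun a => ψ a), ← coeff_prod_one_add, hprod]
  have hA : (1 - (- X) ^ d : Polynomial ℂ) = 1 + C ((-1 : ℂ) ^ (d + 1)) * X ^ d := by
    rw [neg_pow, map_pow, map_neg, map_one, pow_succ]
    ring
  have hB : (1 - X ^ d : Polynomial ℂ) = 1 + C (-1 : ℂ) * X ^ d := by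
    rw [map_neg, map_one]
    ring
  rw [hA, hB, coeff_one_add_C_pow, coeff_one_add_C_pow, Finset.mul_sum, mul_assoc,
    Finset.mul_sum, Finset.mul_sum]
  refine Finset.sum_congr rfl fun j _ => ?_
  by_cases h : k = d * j
  · rw [if_pos h, if_pos h, ← pow_mul]
    have h2 : (d + 1) * j = k + j := by rw [h]; ring
    rw [h2, pow_add]
    ring
  · rw [if_neg h, if_neg h]; simp

theorem stmt_18 (p n k : ℕ) (hp : p.Prime) (hp3 : 3 ≤ p) [NeZero (p * (n + 1))]
    (hk : 1 ≤ k) (ψ : AddChar (ZMod (p * (n + 1))) ℂ) (hord : ¬ p ∣ orderOf ψ) :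
    (∑ x ∈ Finset.univ.filter
        (fun x : Fin k → ZMod (p * (n + 1)) =>
          (∀ i, x i ∈ resD p (p * (n + 1))) ∧ Function.Injective x),
      ∏ i, ψ (x i)) =
    (-1) ^ k * (Nat.factorial k : ℂ) *
      (((1 - Polynomial.X ^ (orderOf ψ)) ^
          ((p - 1) * (p * (n + 1)) / (p * orderOf ψ)) : Polynomial ℂ).coeff k) :=
  stmt_aux p k hp ψ ⟨n + 1, rfl⟩ hord
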